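/- Let μ := Δ_m⁻¹∘Δ̄, where Δ_m := σ_m⁻¹∘Δ (so μ(h_j) = h_j + 1 for j ≠ m, μ(h_m) = h_m, and μ(k_j) = k_j − 1 for all j). Suppose P, Q ∈ Mat₂(P) satisfy P·μ(P) = 0, Q·μ⁻¹(Q) = 0 and P·μ(Q) + Q·μ⁻¹(P) = h_m·I₂. Then there exist an invertible matrix W ∈ Mat₂(P) and c ∈ ℂˣ such that either W⁻¹·P·μ(W) = [[0, c·h_m],[0,0]] and W⁻¹·Q·μ⁻¹(W) = [[0,0],[c⁻¹,0]], or W⁻¹·P·μ(W) = [[0, c],[0,0]] and W⁻¹·Q·μ⁻¹(W) = [[0,0],[c⁻¹·h_m,0]]. -/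

import Mathlib

open MvPolynomial

/-- The shift automorphism of `ℂ[x_i : i ∈ ι]` sending `x_i ↦ x_i + c i`. -/
noncomputable def shiftAut {ι : Type*} (c : ι → ℂ) :
    MvPolynomial ι ℂ ≃ₐ[ℂ] MvPolynomial ι ℂ :=
  AlgEquiv.ofAlgHom
    (aeval fun i => X i + C (c i))
    (aeval fun i => X i - C (c i))
    (by ext i : 1; simp)
    (by ext i : 1; simp)

/-- The polynomial ring `P = ℂ[h₁,…,h_{m+2}, k₁,…,k_{n+1}]`: the `h` variables are indexed by
`Sum.inl`, the `k` variables by `Sum.inr`.  (Here the actual parameters of the paper are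
`m + 2 ≥ 2` and `n + 2 ≥ 2`, with `(n + 2) - 1 = n + 1` variables `k`.) -/
abbrev Pring (m n : ℕ) := MvPolynomial (Fin (m + 2) ⊕ Fin (n + 1)) ℂ

/-- `Δ = σ₁∘⋯∘σ_m`: each `h_i ↦ h_i - 1`, the `k_j` fixed. -/
noncomputable def DelP (m n : ℕ) : Pring m n ≃ₐ[ℂ] Pring m n :=
  shiftAut (Sum.elim (fun _ => (-1 : ℂ)) (fun _ => (0 : ℂ)))

/-- `Δ̄ = τ₁∘⋯∘τ_{n−1}`: each `k_j ↦ k_j - 1`, the `h_i` fixed. -/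
noncomputable def DelBarP (m n : ℕ) : Pring m n ≃ₐ[ℂ] Pring m n :=
  shiftAut (Sum.elim (fun _ => (0 : ℂ)) (fun _ => (-1 : ℂ)))

/-- `σ_m`: `h_m ↦ h_m - 1`, all other variables fixed (here `h_m` is the last `h`-variable). -/
noncomputable def sigLast (m n : ℕ) : Pring m n ≃ₐ[ℂ] Pring m n :=
  shiftAut (fun x => if x = Sum.inl (Fin.last (m + 1)) then (-1 : ℂ) else 0)

/-- `Δ_m := σ_m⁻¹ ∘ Δ`. -/
noncomputable def DelmP (m n : ℕ) : Pring m n ≃ₐ[ℂ] Pring m n :=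
  (DelP m n).trans (sigLast m n).symm

/-- `μ := Δ_m⁻¹ ∘ Δ̄`, so `μ(h_j) = h_j + 1` for `j ≠ m`, `μ(h_m) = h_m`,
and `μ(k_j) = k_j - 1` for all `j`. -/
noncomputable def muP (m n : ℕ) : Pring m n ≃ₐ[ℂ] Pring m n :=
  (DelBarP m n).trans (DelmP m n).symm

/-! ### Auxiliary lemmas -/

lemma mv_prime_X (σ : Type*) [DecidableEq σ] (i : σ) : Prime (X i : MvPolynomial σ ℂ) := by
  classical
  let φ : MvPolynomial σ ℂ ≃ₐ[ℂ] Polynomial (MvPolynomial {j // j ≠ i} ℂ) :=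
    (renameEquiv ℂ (Equiv.optionSubtypeNe i).symm).trans (optionEquivLeft ℂ _)
  rw [← MulEquiv.prime_iff φ.toMulEquiv]
  have h1 : φ.toMulEquiv (X i) = Polynomial.X := by
    show φ (X i) = Polynomial.X
    simp only [φ, AlgEquiv.trans_apply, renameEquiv_apply, rename_X,
      Equiv.optionSubtypeNe_symm_self, optionEquivLeft_X_none]
  rw [h1]
  exact Polynomial.prime_X

lemma fin_unit_const : ∀ (k : ℕ) (p : MvPolynomial (Fin k) ℂ), IsUnit p → ∃ c : ℂ, p = C c := by
  intro k
  induction k with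
  | zero => intro p _; exact ⟨constantCoeff p, by
      obtain ⟨c, rfl⟩ := C_surjective (Fin 0) p
      simp⟩
  | succ k ih =>
    intro p hp
    have h1 : IsUnit (finSuccEquiv ℂ k p) := hp.map _
    obtain ⟨r, hr, hrp⟩ := Polynomial.isUnit_iff.mp h1
    obtain ⟨c, rfl⟩ := ih r hr
    refine ⟨c, ?_⟩
    have h2 : (finSuccEquiv ℂ k).symm (Polynomial.C (C c)) = C c := by
      have := RingHom.congr_fun (finSuccEquiv_comp_C_eq_C (R := ℂ) k) c
      simpa using this
    calc p = (finSuccEquiv ℂ k).symm ((finSuccEquiv ℂ k) p) := by simp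
    _ = C c := by rw [← hrp]; exact h2

lemma mv_unit_const {σ : Type*} [Fintype σ] {p : MvPolynomial σ ℂ} (hp : IsUnit p) :
    ∃ c : ℂˣ, p = C (c : ℂ) := by
  have h1 : IsUnit (renameEquiv ℂ (Fintype.equivFin σ) p) := hp.map _
  obtain ⟨c, hc⟩ := fin_unit_const _ _ h1
  have hpc : p = C c := by
    apply (renameEquiv ℂ (Fintype.equivFin σ)).injective
    rw [hc]; simp
  have hcu : IsUnit c := by
    have h0 := hp
    rw [hpc] at h0
    have h2 : IsUnit (constantCoeff (C c : MvPolynomial σ ℂ)) := h0.map _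
    simpa using h2
  exact ⟨hcu.unit, by rw [hpc]; simp⟩

section UFD
variable {R : Type*} [CommRing R] [IsDomain R] [UniqueFactorizationMonoid R]

/-- If `a*u + b*v = 0` with `a, b` relatively prime, then `(u,v) = s • (b,-a)`. -/
lemma relprime_solve {a b u v : R} (h : a * u + b * v = 0) (hab : IsRelPrime a b) :
    ∃ s : R, u = s * b ∧ v = -(s * a) := by
  by_cases hb : b = 0
  · subst hb
    have hau : IsUnit a := hab (dvd_refl a) (dvd_zero a)
    have hu : u = 0 := by
      have h0 : a * u = 0 := by linear_combination h
      rcases mul_eq_zero.mp h0 with h' | h'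
      · exact absurd h' hau.ne_zero
      · exact h'
    obtain ⟨w, hw⟩ := hau.exists_left_inv
    exact ⟨-(v * w), by simp [hu], by
      have h1 : -(-(v * w) * a) = v * (w * a) := by ring
      rw [h1, hw, mul_one]⟩
  · have hdvd : b ∣ a * u := ⟨-v, by linear_combination h⟩
    have hbu : b ∣ u := (hab.symm).dvd_of_dvd_mul_left hdvd
    obtain ⟨s, hs⟩ := hbu
    refine ⟨s, by rw [hs, mul_comm], ?_⟩
    have h0 : b * (v + s * a) = 0 := by rw [hs] at h; linear_combination h
    rcases mul_eq_zero.mp h0 with h' | h'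
    · exact absurd h' hb
    · linear_combination h'

/-- Primitive factorization of a pair of elements, not both zero. -/
lemma primitive_pair (a c : R) (h : ¬(a = 0 ∧ c = 0)) :
    ∃ g x₁ x₂ : R, a = x₁ * g ∧ c = x₂ * g ∧ IsRelPrime x₁ x₂ := by
  letI : GCDMonoid R := UniqueFactorizationMonoid.toGCDMonoid R
  have hg : gcd a c ≠ 0 := by
    intro h0
    exact h ⟨(gcd_eq_zero_iff a c).mp h0 |>.1, (gcd_eq_zero_iff a c).mp h0 |>.2⟩
  obtain ⟨x₁, hx₁⟩ := gcd_dvd_left a c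
  obtain ⟨x₂, hx₂⟩ := gcd_dvd_right a c
  refine ⟨gcd a c, x₁, x₂, by linear_combination hx₁, by linear_combination hx₂, ?_⟩
  intro e he1 he2
  have h1 : gcd a c * e ∣ a := (mul_dvd_mul_left (gcd a c) he1).trans (dvd_of_eq hx₁.symm)
  have h2 : gcd a c * e ∣ c := (mul_dvd_mul_left (gcd a c) he2).trans (dvd_of_eq hx₂.symm)
  obtain ⟨f, hf⟩ := dvd_gcd h1 h2
  have h3 : gcd a c * (e * f) = gcd a c * 1 := by rw [mul_one, ← mul_assoc, ← hf]
  exact IsUnit.of_mul_eq_one f (mul_left_cancel₀ hg h3)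

/-- Rank-one factorization of a singular `2×2` matrix over a UFD, with primitive column. -/
lemma rank_one_factor (P : Matrix (Fin 2) (Fin 2) R) (hd : P.det = 0) :
    ∃ x₁ x₂ y₁ y₂ : R, IsRelPrime x₁ x₂ ∧
      P = Matrix.of ![![x₁ * y₁, x₁ * y₂], ![x₂ * y₁, x₂ * y₂]] := by
  obtain ⟨a, b, c, d, rfl⟩ : ∃ a b c d, P = Matrix.of ![![a, b], ![c, d]] :=
    ⟨P 0 0, P 0 1, P 1 0, P 1 1, by ext i j; fin_cases i <;> fin_cases j <;> simp⟩
  have hdet : a * d - b * c = 0 := by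
    simpa [Matrix.det_fin_two] using hd
  have hmat : ∀ x₁ x₂ y₁ y₂ : R, a = x₁ * y₁ → b = x₁ * y₂ → c = x₂ * y₁ → d = x₂ * y₂ →
      Matrix.of ![![a, b], ![c, d]] = Matrix.of ![![x₁ * y₁, x₁ * y₂], ![x₂ * y₁, x₂ * y₂]] := by
    intro x₁ x₂ y₁ y₂ h1 h2 h3 h4
    rw [h1, h2, h3, h4]
  by_cases hac : a = 0 ∧ c = 0
  · obtain ⟨rfl, rfl⟩ : a = 0 ∧ c = 0 := hac
    by_cases hbd : b = 0 ∧ d = 0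
    · obtain ⟨rfl, rfl⟩ := hbd
      exact ⟨1, 0, 0, 0, isRelPrime_one_left, hmat 1 0 0 0 (by ring) (by ring) (by ring) (by ring)⟩
    · obtain ⟨g, x₁, x₂, h1, h2, hrel⟩ := primitive_pair b d hbd
      exact ⟨x₁, x₂, 0, g, hrel, hmat x₁ x₂ 0 g (by ring) h1 (by ring) h2⟩
  · obtain ⟨g, x₁, x₂, h1, h2, hrel⟩ := primitive_pair a c hac
    have hgne : g ≠ 0 := by
      rintro rfl
      exact hac ⟨by rw [h1, mul_zero], by rw [h2, mul_zero]⟩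
    have hkey : x₁ * d + x₂ * (-b) = 0 := by
      have h0 : g * (x₁ * d + x₂ * (-b)) = 0 := by
        rw [h1, h2] at hdet; linear_combination hdet
      rcases mul_eq_zero.mp h0 with h' | h'
      · exact absurd h' hgne
      · exact h'
    obtain ⟨t, ht1, ht2⟩ := relprime_solve hkey hrel
    exact ⟨x₁, x₂, g, t, hrel, hmat x₁ x₂ g t h1 (by linear_combination -ht2) h2
      (by linear_combination ht1)⟩

end UFD

lemma four_cancel {R : Type*} [CommRing R] [IsDomain R] {a1 a2 b1 b2 A : R}
    (h11 : a1 * b1 * A = 0) (h12 : a1 * b2 * A = 0) (h21 : a2 * b1 * A = 0)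
    (h22 : a2 * b2 * A = 0) (ha : ¬(a1 = 0 ∧ a2 = 0)) (hb : ¬(b1 = 0 ∧ b2 = 0)) : A = 0 := by
  rcases not_and_or.mp ha with ha' | ha' <;> rcases not_and_or.mp hb with hb' | hb'
  · exact (mul_eq_zero.mp h11).resolve_left (mul_ne_zero ha' hb')
  · exact (mul_eq_zero.mp h12).resolve_left (mul_ne_zero ha' hb')
  · exact (mul_eq_zero.mp h21).resolve_left (mul_ne_zero ha' hb')
  · exact (mul_eq_zero.mp h22).resolve_left (mul_ne_zero ha' hb')

lemma relprime_not_both_zero {R : Type*} [CommRing R] [Nontrivial R] {x1 x2 : R}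
    (h : IsRelPrime x1 x2) : ¬(x1 = 0 ∧ x2 = 0) := by
  rintro ⟨rfl, rfl⟩
  exact not_isUnit_zero (h (dvd_refl 0) (dvd_refl 0))

lemma shiftAut_X {ι : Type*} (c : ι → ℂ) (i : ι) : shiftAut c (X i) = X i + C (c i) := by
  simp [shiftAut, AlgEquiv.ofAlgHom]

lemma shiftAut_symm_X {ι : Type*} (c : ι → ℂ) (i : ι) :
    (shiftAut c).symm (X i) = X i - C (c i) := by
  simp [shiftAut, AlgEquiv.ofAlgHom]

lemma muP_h (m n : ℕ) :
    muP m n (X (Sum.inl (Fin.last (m+1)))) = X (Sum.inl (Fin.last (m+1))) := by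
  rw [muP, DelmP, DelBarP, DelP, sigLast]
  simp only [AlgEquiv.trans_apply, AlgEquiv.symm_trans_apply, AlgEquiv.symm_symm]
  rw [shiftAut_X]
  simp only [Sum.elim_inl, map_zero, C_0, add_zero]
  rw [shiftAut_X]
  rw [if_pos rfl, map_add, shiftAut_symm_X]
  simp only [Sum.elim_inl]
  have h1 : ((shiftAut (Sum.elim (fun _ => (-1:ℂ)) fun _ => (0:ℂ)) :
      Pring m n ≃ₐ[ℂ] Pring m n)).symm (C (-1 : ℂ)) = C (-1 : ℂ) := by
    have := ((shiftAut (Sum.elim (fun _ => (-1:ℂ)) fun _ => (0:ℂ)) :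
      Pring m n ≃ₐ[ℂ] Pring m n)).symm.commutes (-1 : ℂ)
    simpa [algebraMap_eq] using this
  rw [h1]
  ring

lemma muP_symm_h (m n : ℕ) :
    (muP m n).symm (X (Sum.inl (Fin.last (m+1)))) = X (Sum.inl (Fin.last (m+1))) := by
  have h1 := congrArg (muP m n).symm (muP_h m n)
  rw [AlgEquiv.symm_apply_apply] at h1; exact h1.symm


set_option maxHeartbeats 1000000 in
/-- If `P, Q ∈ Mat₂(P)` satisfy `P·μ(P) = 0`, `Q·μ⁻¹(Q) = 0` and
`P·μ(Q) + Q·μ⁻¹(P) = h_m·I₂`, then `(P,Q)` is twisted-conjugate to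
`([[0, c·h_m],[0,0]], [[0,0],[c⁻¹,0]])` or `([[0,c],[0,0]], [[0,0],[c⁻¹·h_m,0]])`, `c ∈ ℂˣ`. -/
theorem stmt_18 (m n : ℕ)
    (P Q : Matrix (Fin 2) (Fin 2) (Pring m n))
    (hP : P * P.map ⇑(muP m n) = 0)
    (hQ : Q * Q.map ⇑(muP m n).symm = 0)
    (hPQ : P * Q.map ⇑(muP m n) + Q * P.map ⇑(muP m n).symm =
      (X (Sum.inl (Fin.last (m + 1))) : Pring m n) •
        (1 : Matrix (Fin 2) (Fin 2) (Pring m n))) :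
    ∃ W : Matrix (Fin 2) (Fin 2) (Pring m n), IsUnit W ∧
      ∃ c : ℂˣ,
        ((W⁻¹ * P * W.map ⇑(muP m n) =
            !![0, C (c : ℂ) * X (Sum.inl (Fin.last (m + 1))); 0, 0] ∧
          W⁻¹ * Q * W.map ⇑(muP m n).symm = !![0, 0; C ((c⁻¹ : ℂˣ) : ℂ), 0]) ∨
         (W⁻¹ * P * W.map ⇑(muP m n) = !![0, C (c : ℂ); 0, 0] ∧
          W⁻¹ * Q * W.map ⇑(muP m n).symm =
            !![0, 0; C ((c⁻¹ : ℂˣ) : ℂ) * X (Sum.inl (Fin.last (m + 1))), 0])) := by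
  classical
  set hh : Pring m n := X (Sum.inl (Fin.last (m + 1))) with hhdef
  have hprime : Prime hh := by rw [hhdef]; exact mv_prime_X _ _
  have hhne : hh ≠ 0 := hprime.ne_zero
  -- the determinants of P and Q vanish
  have hdetP : P.det = 0 := by
    have h0 := congrArg Matrix.det hP
    have h1 : (P.map ⇑(muP m n)).det = (muP m n) P.det := by
      rw [Matrix.det_fin_two, Matrix.det_fin_two]
      simp only [Matrix.map_apply, map_mul, map_sub]
    rw [Matrix.det_mul, h1, Matrix.det_zero] at h0
    rcases mul_eq_zero.mp h0 with h' | h'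
    · exact h'
    · exact (muP m n).injective (by rw [h', map_zero])
  have hdetQ : Q.det = 0 := by
    have h0 := congrArg Matrix.det hQ
    have h1 : (Q.map ⇑(muP m n).symm).det = (muP m n).symm Q.det := by
      rw [Matrix.det_fin_two, Matrix.det_fin_two]
      simp only [Matrix.map_apply, map_mul, map_sub]
    rw [Matrix.det_mul, h1, Matrix.det_zero] at h0
    rcases mul_eq_zero.mp h0 with h' | h'
    · exact h'
    · exact (muP m n).symm.injective (by rw [h', map_zero])
  obtain ⟨x1, x2, y1, y2, hxrel, hPf⟩ := rank_one_factor P hdetP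
  obtain ⟨z1, z2, w1, w2, hzrel, hQf⟩ := rank_one_factor Q hdetQ
  have hx12 := relprime_not_both_zero hxrel
  have hz12 := relprime_not_both_zero hzrel
  have hy12 : ¬(y1 = 0 ∧ y2 = 0) := by
    rintro ⟨rfl, rfl⟩
    have g := congrFun (congrFun hPQ 0) 0
    rw [hPf] at g
    simp only [Matrix.add_apply, Matrix.mul_apply, Fin.sum_univ_two, Matrix.map_apply,
      Matrix.of_apply, Matrix.cons_val', Matrix.cons_val_zero, Matrix.cons_val_one,
      Matrix.head_cons, Matrix.head_fin_const, Matrix.empty_val', Matrix.cons_val_fin_one,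
      mul_zero, zero_mul, map_zero, add_zero, zero_add, Matrix.smul_apply, Matrix.one_apply_eq,
      smul_eq_mul, mul_one] at g
    exact hhne (by linear_combination -g)
  have hw12 : ¬(w1 = 0 ∧ w2 = 0) := by
    rintro ⟨rfl, rfl⟩
    have g := congrFun (congrFun hPQ 0) 0
    rw [hQf] at g
    simp only [Matrix.add_apply, Matrix.mul_apply, Fin.sum_univ_two, Matrix.map_apply,
      Matrix.of_apply, Matrix.cons_val', Matrix.cons_val_zero, Matrix.cons_val_one,
      Matrix.head_cons, Matrix.head_fin_const, Matrix.empty_val', Matrix.cons_val_fin_one,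
      mul_zero, zero_mul, map_zero, add_zero, zero_add, Matrix.smul_apply, Matrix.one_apply_eq,
      smul_eq_mul, mul_one] at g
    exact hhne (by linear_combination -g)
  have hmy12 : ¬((muP m n) y1 = 0 ∧ (muP m n) y2 = 0) := by
    rintro ⟨h1, h2⟩
    exact hy12 ⟨(muP m n).injective (by rw [h1, map_zero]),
      (muP m n).injective (by rw [h2, map_zero])⟩
  have hmw12 : ¬((muP m n).symm w1 = 0 ∧ (muP m n).symm w2 = 0) := by
    rintro ⟨h1, h2⟩
    exact hw12 ⟨(muP m n).symm.injective (by rw [h1, map_zero]),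
      (muP m n).symm.injective (by rw [h2, map_zero])⟩
  -- the key orthogonality relations from hP and hQ
  have hA : y1 * (muP m n) x1 + y2 * (muP m n) x2 = 0 := by
    have e00 := congrFun (congrFun hP 0) 0
    have e01 := congrFun (congrFun hP 0) 1
    have e10 := congrFun (congrFun hP 1) 0
    have e11 := congrFun (congrFun hP 1) 1
    rw [hPf] at e00 e01 e10 e11
    simp only [Matrix.mul_apply, Fin.sum_univ_two, Matrix.map_apply, Matrix.of_apply,
      Matrix.cons_val', Matrix.cons_val_zero, Matrix.cons_val_one, Matrix.head_cons,
      Matrix.head_fin_const, Matrix.empty_val', Matrix.cons_val_fin_one, map_mul,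
      Matrix.zero_apply] at e00 e01 e10 e11
    refine four_cancel (a1 := x1) (a2 := x2) (b1 := (muP m n) y1) (b2 := (muP m n) y2)
      ?_ ?_ ?_ ?_ hx12 hmy12
    · linear_combination e00
    · linear_combination e01
    · linear_combination e10
    · linear_combination e11
  have hB : w1 * (muP m n).symm z1 + w2 * (muP m n).symm z2 = 0 := by
    have e00 := congrFun (congrFun hQ 0) 0
    have e01 := congrFun (congrFun hQ 0) 1
    have e10 := congrFun (congrFun hQ 1) 0
    have e11 := congrFun (congrFun hQ 1) 1
    rw [hQf] at e00 e01 e10 e11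
    simp only [Matrix.mul_apply, Fin.sum_univ_two, Matrix.map_apply, Matrix.of_apply,
      Matrix.cons_val', Matrix.cons_val_zero, Matrix.cons_val_one, Matrix.head_cons,
      Matrix.head_fin_const, Matrix.empty_val', Matrix.cons_val_fin_one, map_mul,
      Matrix.zero_apply] at e00 e01 e10 e11
    refine four_cancel (a1 := z1) (a2 := z2) (b1 := (muP m n).symm w1)
      (b2 := (muP m n).symm w2) ?_ ?_ ?_ ?_ hz12 hmw12
    · linear_combination e00
    · linear_combination e01
    · linear_combination e10
    · linear_combination e11
  -- the four scalar equations from hPQ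
  have g00 := congrFun (congrFun hPQ 0) 0
  have g01 := congrFun (congrFun hPQ 0) 1
  have g10 := congrFun (congrFun hPQ 1) 0
  have g11 := congrFun (congrFun hPQ 1) 1
  rw [hPf, hQf] at g00 g01 g10 g11
  simp only [Matrix.add_apply, Matrix.mul_apply, Fin.sum_univ_two, Matrix.map_apply,
    Matrix.of_apply, Matrix.cons_val', Matrix.cons_val_zero, Matrix.cons_val_one,
    Matrix.head_cons, Matrix.head_fin_const, Matrix.empty_val', Matrix.cons_val_fin_one,
    map_mul, Matrix.smul_apply, Matrix.one_apply_eq, smul_eq_mul, mul_one,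
    Matrix.one_apply_ne (show (0 : Fin 2) ≠ 1 by decide),
    Matrix.one_apply_ne (show (1 : Fin 2) ≠ 0 by decide), mul_zero] at g00 g01 g10 g11
  have E11 : (y1 * (muP m n) z1 + y2 * (muP m n) z2) * (x1 * (muP m n) w1) +
      (w1 * (muP m n).symm x1 + w2 * (muP m n).symm x2) * (z1 * (muP m n).symm y1) = hh := by
    linear_combination g00
  have E12 : (y1 * (muP m n) z1 + y2 * (muP m n) z2) * (x1 * (muP m n) w2) +
      (w1 * (muP m n).symm x1 + w2 * (muP m n).symm x2) * (z1 * (muP m n).symm y2) = 0 := by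
    linear_combination g01
  have E21 : (y1 * (muP m n) z1 + y2 * (muP m n) z2) * (x2 * (muP m n) w1) +
      (w1 * (muP m n).symm x1 + w2 * (muP m n).symm x2) * (z2 * (muP m n).symm y1) = 0 := by
    linear_combination g10
  have E22 : (y1 * (muP m n) z1 + y2 * (muP m n) z2) * (x2 * (muP m n) w2) +
      (w1 * (muP m n).symm x1 + w2 * (muP m n).symm x2) * (z2 * (muP m n).symm y2) = hh := by
    linear_combination g11
  clear g00 g01 g10 g11
  set α : Pring m n := y1 * (muP m n) z1 + y2 * (muP m n) z2 with hαdef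
  set β : Pring m n := w1 * (muP m n).symm x1 + w2 * (muP m n).symm x2 with hβdef
  set D : Pring m n := x1 * z2 - x2 * z1 with hDdef
  set EE : Pring m n := (muP m n) w1 * (muP m n).symm y2 -
    (muP m n) w2 * (muP m n).symm y1 with hEEdef
  -- determinant identity
  have hh2 : α * (β * (D * EE)) = hh * hh := by
    linear_combination (α * (x1 * (muP m n) w1) + β * (z1 * (muP m n).symm y1)) * E22 +
      hh * E11 - (α * (x1 * (muP m n) w2) + β * (z1 * (muP m n).symm y2)) * E21
  have hprodne : α * (β * (D * EE)) ≠ 0 := by rw [hh2]; exact mul_ne_zero hhne hhne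
  have hαne : α ≠ 0 := left_ne_zero_of_mul hprodne
  have hβDE := right_ne_zero_of_mul hprodne
  have hβne : β ≠ 0 := left_ne_zero_of_mul hβDE
  have hDne : D ≠ 0 := left_ne_zero_of_mul (right_ne_zero_of_mul hβDE)
  -- orthogonality of μw with z
  have hwz : (muP m n) w1 * z1 + (muP m n) w2 * z2 = 0 := by
    have h0 : α * (((muP m n) w1 * z1 + (muP m n) w2 * z2) * D) = 0 := by
      linear_combination (z1 * z2) * E11 + (z2 * z2) * E12 - (z1 * z1) * E21 - (z1 * z2) * E22
    rcases mul_eq_zero.mp h0 with h' | h'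
    · exact absurd h' hαne
    · rcases mul_eq_zero.mp h' with h'' | h''
      · exact h''
      · exact absurd h'' hDne
  have hyz : β * ((muP m n).symm y1 * z1 + (muP m n).symm y2 * z2) = hh := by
    have t1 : z1 * (β * ((muP m n).symm y1 * z1 + (muP m n).symm y2 * z2) - hh) = 0 := by
      linear_combination z1 * E11 + z2 * E12 - (α * x1) * hwz
    have t2 : z2 * (β * ((muP m n).symm y1 * z1 + (muP m n).symm y2 * z2) - hh) = 0 := by
      linear_combination z1 * E21 + z2 * E22 - (α * x2) * hwz
    rcases not_and_or.mp hz12 with hz | hz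
    · have := (mul_eq_zero.mp t1).resolve_left hz
      linear_combination this
    · have := (mul_eq_zero.mp t2).resolve_left hz
      linear_combination this
  have hyx : (muP m n).symm y1 * x1 + (muP m n).symm y2 * x2 = 0 := by
    have h0 : β * (((muP m n).symm y1 * x1 + (muP m n).symm y2 * x2) * D) = 0 := by
      linear_combination -(x1 * x2) * E11 - (x2 * x2) * E12 + (x1 * x1) * E21 + (x1 * x2) * E22
    rcases mul_eq_zero.mp h0 with h' | h'
    · exact absurd h' hβne
    · rcases mul_eq_zero.mp h' with h'' | h''
      · exact h''
      · exact absurd h'' hDne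
  have hwx : α * ((muP m n) w1 * x1 + (muP m n) w2 * x2) = hh := by
    have t1 : x1 * (α * ((muP m n) w1 * x1 + (muP m n) w2 * x2) - hh) = 0 := by
      linear_combination x1 * E11 + x2 * E12 - (β * z1) * hyx
    have t2 : x2 * (α * ((muP m n) w1 * x1 + (muP m n) w2 * x2) - hh) = 0 := by
      linear_combination x1 * E21 + x2 * E22 - (β * z2) * hyx
    rcases not_and_or.mp hx12 with hx | hx
    · have := (mul_eq_zero.mp t1).resolve_left hx
      linear_combination this
    · have := (mul_eq_zero.mp t2).resolve_left hx
      linear_combination this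
  -- solve the orthogonality relations
  obtain ⟨s, hs1, hs2⟩ := relprime_solve
    (show z1 * ((muP m n) w1) + z2 * ((muP m n) w2) = 0 by linear_combination hwz) hzrel
  obtain ⟨r, hr1, hr2⟩ := relprime_solve
    (show x1 * ((muP m n).symm y1) + x2 * ((muP m n).symm y2) = 0 by linear_combination hyx)
    hxrel
  have hasD : (α * s) * D = hh := by
    linear_combination hwx - (α * x1) * hs1 - (α * x2) * hs2
  have hbrD : (β * (-r)) * D = hh := by
    linear_combination hyz - (β * z1) * hr1 - (β * z2) * hr2
  have hmub : (muP m n) β = (muP m n) w1 * x1 + (muP m n) w2 * x2 := by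
    rw [hβdef, map_add, map_mul, map_mul, AlgEquiv.apply_symm_apply, AlgEquiv.apply_symm_apply]
  have hαμβ : α * (muP m n) β = hh := by rw [hmub]; exact hwx
  -- D is a unit
  have hDu : IsUnit D := by
    rcases hprime.irreducible.isUnit_or_isUnit (show hh = (α * s) * D by
        linear_combination -hasD) with h1 | h1
    · rcases hprime.irreducible.isUnit_or_isUnit (show hh = (β * (-r)) * D by
          linear_combination -hbrD) with h2 | h2
      · exfalso
        have hαu : IsUnit α := isUnit_of_mul_isUnit_left h1
        have hβu : IsUnit β := isUnit_of_mul_isUnit_left h2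
        have hun : IsUnit hh := by
          rw [← hαμβ]; exact hαu.mul (hβu.map (muP m n))
        exact hprime.not_unit hun
      · exact h2
    · exact h1
  -- the conjugating matrix
  set W : Matrix (Fin 2) (Fin 2) (Pring m n) := Matrix.of ![![x1, z1], ![x2, z2]] with hWdef
  have hdetW : W.det = D := by
    rw [hWdef]
    rw [show Matrix.of ![![x1, z1], ![x2, z2]] = !![x1, z1; x2, z2] from rfl,
      Matrix.det_fin_two_of, hDdef]
    ring
  have hWdetu : IsUnit W.det := by rw [hdetW]; exact hDu
  have hWu : IsUnit W := (Matrix.isUnit_iff_isUnit_det W).mpr hWdetu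
  have hWinv : W⁻¹ * W = 1 := Matrix.nonsing_inv_mul W hWdetu
  have hPW : P * W.map ⇑(muP m n) = W * Matrix.of ![![0, α], ![0, 0]] := by
    rw [hPf, hWdef]
    refine Matrix.ext fun i j => ?_
    fin_cases i <;> fin_cases j <;>
      simp only [Matrix.mul_apply, Fin.sum_univ_two, Matrix.map_apply, Matrix.of_apply,
        Matrix.cons_val', Matrix.cons_val_zero, Matrix.cons_val_one, Matrix.head_cons,
        Matrix.head_fin_const, Matrix.empty_val', Matrix.cons_val_fin_one, map_mul,
        mul_zero, zero_mul, add_zero, zero_add, Fin.isValue, Fin.zero_eta, Fin.mk_one]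
    · linear_combination x1 * hA
    · linear_combination -x1 * hαdef
    · linear_combination x2 * hA
    · linear_combination -x2 * hαdef
  have hQW : Q * W.map ⇑(muP m n).symm = W * Matrix.of ![![0, 0], ![β, 0]] := by
    rw [hQf, hWdef]
    refine Matrix.ext fun i j => ?_
    fin_cases i <;> fin_cases j <;>
      simp only [Matrix.mul_apply, Fin.sum_univ_two, Matrix.map_apply, Matrix.of_apply,
        Matrix.cons_val', Matrix.cons_val_zero, Matrix.cons_val_one, Matrix.head_cons,
        Matrix.head_fin_const, Matrix.empty_val', Matrix.cons_val_fin_one, map_mul,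
        mul_zero, zero_mul, add_zero, zero_add, Fin.isValue, Fin.zero_eta, Fin.mk_one]
    · linear_combination -z1 * hβdef
    · linear_combination z1 * hB
    · linear_combination -z2 * hβdef
    · linear_combination z2 * hB
  have hPfinal : W⁻¹ * P * W.map ⇑(muP m n) = Matrix.of ![![0, α], ![0, 0]] := by
    rw [Matrix.mul_assoc, hPW, ← Matrix.mul_assoc, hWinv, Matrix.one_mul]
  have hQfinal : W⁻¹ * Q * W.map ⇑(muP m n).symm = Matrix.of ![![0, 0], ![β, 0]] := by
    rw [Matrix.mul_assoc, hQW, ← Matrix.mul_assoc, hWinv, Matrix.one_mul]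
  -- final case split: α is a unit or μ(β) is a unit
  have hCsymm : ∀ a : ℂ, (muP m n).symm (C a) = C a := by
    intro a
    have := (muP m n).symm.commutes a
    simpa [algebraMap_eq] using this
  have hCmu : ∀ a : ℂ, (muP m n) (C a) = C a := by
    intro a
    have := (muP m n).commutes a
    simpa [algebraMap_eq] using this
  rcases hprime.irreducible.isUnit_or_isUnit (show hh = α * (muP m n) β by
      linear_combination -hαμβ) with hαu | hβμu
  · -- α is a unit : second alternative
    obtain ⟨cu, hcu⟩ := mv_unit_const hαu
    have hcne : (C (cu : ℂ) : Pring m n) ≠ 0 := by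
      simp only [ne_eq, C_eq_zero]
      exact cu.ne_zero
    have hμβ : (muP m n) β = C ((cu⁻¹ : ℂˣ) : ℂ) * hh := by
      apply mul_left_cancel₀ hcne
      have h2 : (C (cu : ℂ) : Pring m n) * (C ((cu⁻¹ : ℂˣ) : ℂ) * hh) = hh := by
        rw [← mul_assoc, ← C_mul, Units.mul_inv, C_1, one_mul]
      rw [h2, ← hcu, hαμβ]
    have hβval : β = C ((cu⁻¹ : ℂˣ) : ℂ) * hh := by
      have h3 := congrArg (muP m n).symm hμβ
      rw [AlgEquiv.symm_apply_apply, map_mul, hCsymm] at h3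
      rw [h3, hhdef, muP_symm_h]
    refine ⟨W, hWu, cu, Or.inr ⟨?_, ?_⟩⟩
    · rw [hPfinal, hcu]
    · rw [hQfinal, hβval, hhdef]
  · -- μ(β) is a unit : first alternative
    have hβu : IsUnit β := by
      have h2 : IsUnit ((muP m n).symm ((muP m n) β)) := hβμu.map _
      rwa [AlgEquiv.symm_apply_apply] at h2
    obtain ⟨bu, hbu⟩ := mv_unit_const hβu
    have hbne : (C (bu : ℂ) : Pring m n) ≠ 0 := by
      simp only [ne_eq, C_eq_zero]
      exact bu.ne_zero
    have hαval : α = C (((bu⁻¹ : ℂˣ)) : ℂ) * hh := by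
      apply mul_right_cancel₀ hbne
      have h2 : (muP m n) β = C (bu : ℂ) := by rw [hbu, hCmu]
      have h3 : (C (((bu⁻¹ : ℂˣ)) : ℂ) * hh) * C (bu : ℂ) = hh := by
        rw [mul_comm, ← mul_assoc, ← C_mul, Units.mul_inv, C_1, one_mul]
      rw [h3, ← h2, hαμβ]
    refine ⟨W, hWu, bu⁻¹, Or.inl ⟨?_, ?_⟩⟩
    · rw [hPfinal, hαval, hhdef]
    · rw [hQfinal, hbu]
      norm_num
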